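/- Let D = ∏_{j=1}^n e^{2πiλ_j x} (d/dx) e^{−2πiλ_j x} be a differential operator of order n ≥ 1 with distinct real frequencies λ_1,…,λ_n, and let J ⊂ [0,1] be an interval. Suppose f : J → ℂ is a C^n function satisfying Df = h with h integrable on J. Then there exists an exponential polynomial p(x) = Σ_{j=1}^n c_j e^{2πiλ_j x} such that sup_{x∈J} |f(x) − p(x)| ≤ m(J)^n · (1/m(J)) ∫_J |h(x)| dx. -/

import Mathlib

open Complex MeasureTheory

noncomputable section Stmt6Aux

namespace Stmt6Aux

/-- The first-order operator `e^{2πilx} (d/dx) e^{-2πilx}`. -/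
def Lop (l : ℝ) (g : ℝ → ℂ) (x : ℝ) : ℂ :=
  Complex.exp (2 * Real.pi * Complex.I * (l : ℂ) * (x : ℂ)) *
    deriv (fun y : ℝ =>
      Complex.exp (-(2 * Real.pi * Complex.I * (l : ℂ) * (y : ℂ))) * g y) x

/-- Composition of the first-order operators along a list of frequencies. -/
def Dl (L : List ℝ) : (ℝ → ℂ) → (ℝ → ℂ) :=
  (L.map Lop).foldr (· ∘ ·) id

lemma Dl_nil (g : ℝ → ℂ) : Dl [] g = g := rfl

lemma Dl_cons (l : ℝ) (L : List ℝ) (g : ℝ → ℂ) : Dl (l :: L) g = Lop l (Dl L g) := rfl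

lemma abs_exp_eq_one (l x : ℝ) :
    ‖Complex.exp (2 * Real.pi * Complex.I * (l : ℂ) * (x : ℂ))‖ = 1 := by
  have : (2 * Real.pi * Complex.I * (l : ℂ) * (x : ℂ)) = ((2 * Real.pi * l * x : ℝ) : ℂ) * Complex.I := by
    push_cast; ring
  rw [this, Complex.norm_exp_ofReal_mul_I]

lemma abs_exp_neg_eq_one (l x : ℝ) :
    ‖Complex.exp (-(2 * Real.pi * Complex.I * (l : ℂ) * (x : ℂ)))‖ = 1 := by
  have : (-(2 * Real.pi * Complex.I * (l : ℂ) * (x : ℂ))) = ((-(2 * Real.pi * l * x) : ℝ) : ℂ) * Complex.I := by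
    push_cast; ring
  rw [this, Complex.norm_exp_ofReal_mul_I]

lemma hasDerivAt_cexp_real (w : ℂ) (x : ℝ) :
    HasDerivAt (fun y : ℝ => Complex.exp (w * (y : ℂ))) (w * Complex.exp (w * (x : ℂ))) x := by
  have h1 : HasDerivAt (fun z : ℂ => Complex.exp (w * z))
      (Complex.exp (w * (x : ℂ)) * w) (x : ℂ) := by
    have h0 := (Complex.hasDerivAt_exp (w * (x : ℂ))).comp (x : ℂ)
      ((hasDerivAt_id (x : ℂ)).const_mul w)
    simp only [mul_one] at h0
    exact h0
  simpa [mul_comm] using h1.comp_ofReal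

lemma contDiff_cexp_real (w : ℂ) {n : WithTop ℕ∞} :
    ContDiff ℝ n (fun y : ℝ => Complex.exp (w * (y : ℂ))) := by
  apply ContDiff.cexp
  exact contDiff_const.mul Complex.ofRealCLM.contDiff

lemma Lop_smooth {s : Set ℝ} (hs : IsOpen s) (l : ℝ) (k : ℕ) {g : ℝ → ℂ}
    (hg : ContDiffOn ℝ (k + 1 : ℕ) g s) : ContDiffOn ℝ (k : ℕ) (Lop l g) s := by
  have h1 : ContDiffOn ℝ (k + 1 : ℕ)
      (fun y : ℝ => Complex.exp (-(2 * Real.pi * Complex.I * (l : ℂ) * (y : ℂ))) * g y) s := by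
    apply ContDiffOn.mul _ hg
    have heq : (fun y : ℝ => Complex.exp (-(2 * Real.pi * Complex.I * (l : ℂ) * (y : ℂ)))) =
        fun y : ℝ => Complex.exp ((-(2 * Real.pi * Complex.I * (l : ℂ))) * (y : ℂ)) := by
      funext y; rw [neg_mul]
    rw [heq]
    exact (contDiff_cexp_real _).contDiffOn
  have h2 : ContDiffOn ℝ (k : ℕ)
      (deriv (fun y : ℝ => Complex.exp (-(2 * Real.pi * Complex.I * (l : ℂ) * (y : ℂ))) * g y)) s := by
    apply h1.deriv_of_isOpen hs
    exact_mod_cast le_refl ((k : WithTop ℕ∞) + 1)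
  exact ((contDiff_cexp_real (2 * Real.pi * Complex.I * (l : ℂ))).contDiffOn).mul h2

lemma Dl_smooth {s : Set ℝ} (hs : IsOpen s) :
    ∀ (L : List ℝ) (k : ℕ) {g : ℝ → ℂ},
      ContDiffOn ℝ (L.length + k : ℕ) g s → ContDiffOn ℝ (k : ℕ) (Dl L g) s := by
  intro L
  induction L with
  | nil => intro k g hg; simpa [Dl_nil] using hg
  | cons l L ih =>
    intro k g hg
    rw [Dl_cons]
    apply Lop_smooth hs l k
    have hlen : (l :: L).length + k = L.length + (k + 1) := by
      simp [List.length_cons]; omega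
    exact ih (k + 1) (hlen ▸ hg)

lemma Lop_exp (l : ℝ) (K w : ℂ) :
    Lop l (fun x : ℝ => K * Complex.exp (w * (x : ℂ))) =
      fun x : ℝ => ((w - 2 * Real.pi * Complex.I * (l : ℂ)) * K) * Complex.exp (w * (x : ℂ)) := by
  funext x
  unfold Lop
  have h1 : (fun y : ℝ => Complex.exp (-(2 * Real.pi * Complex.I * (l : ℂ) * (y : ℂ))) *
      (K * Complex.exp (w * (y : ℂ)))) =
      fun y : ℝ => K * Complex.exp ((w - 2 * Real.pi * Complex.I * (l : ℂ)) * (y : ℂ)) := by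
    funext y
    rw [mul_left_comm, ← Complex.exp_add]
    congr 2
    ring
  rw [h1, ((hasDerivAt_cexp_real (w - 2 * Real.pi * Complex.I * (l : ℂ)) x).const_mul K).deriv]
  rw [show Complex.exp (2 * Real.pi * Complex.I * (l : ℂ) * (x : ℂ)) *
      (K * ((w - 2 * Real.pi * Complex.I * (l : ℂ)) *
        Complex.exp ((w - 2 * Real.pi * Complex.I * (l : ℂ)) * (x : ℂ)))) =
      ((w - 2 * Real.pi * Complex.I * (l : ℂ)) * K) *
        (Complex.exp (2 * Real.pi * Complex.I * (l : ℂ) * (x : ℂ)) *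
          Complex.exp ((w - 2 * Real.pi * Complex.I * (l : ℂ)) * (x : ℂ))) by ring]
  rw [← Complex.exp_add]
  congr 2
  ring

lemma Dl_exp (L : List ℝ) (K w : ℂ) :
    Dl L (fun x : ℝ => K * Complex.exp (w * (x : ℂ))) =
      fun x : ℝ => ((L.map (fun l : ℝ => w - 2 * Real.pi * Complex.I * (l : ℂ))).prod * K) *
        Complex.exp (w * (x : ℂ)) := by
  induction L with
  | nil => funext x; simp [Dl_nil]
  | cons l L ih =>
    rw [Dl_cons, ih, Lop_exp]
    funext x
    rw [List.map_cons, List.prod_cons]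
    ring

lemma Lop_congr {s : Set ℝ} (hs : IsOpen s) (l : ℝ) {u w : ℝ → ℂ}
    (huw : ∀ y ∈ s, u y = w y) {x : ℝ} (hx : x ∈ s) : Lop l u x = Lop l w x := by
  unfold Lop
  congr 1
  apply Filter.EventuallyEq.deriv_eq
  filter_upwards [hs.mem_nhds hx] with y hy
  rw [huw y hy]

lemma diff_exp_neg (l : ℝ) (x : ℝ) :
    DifferentiableAt ℝ
      (fun y : ℝ => Complex.exp (-(2 * Real.pi * Complex.I * (l : ℂ) * (y : ℂ)))) x := by
  have h := (hasDerivAt_cexp_real (-(2 * Real.pi * Complex.I * (l : ℂ))) x).differentiableAt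
  have heq : (fun y : ℝ => Complex.exp (-(2 * Real.pi * Complex.I * (l : ℂ) * (y : ℂ)))) =
      fun y : ℝ => Complex.exp ((-(2 * Real.pi * Complex.I * (l : ℂ))) * (y : ℂ)) := by
    funext y; rw [neg_mul]
  rw [heq]; exact h

lemma Lop_sub (l : ℝ) {u v : ℝ → ℂ} {x : ℝ}
    (hu : DifferentiableAt ℝ u x) (hv : DifferentiableAt ℝ v x) :
    Lop l (fun y => u y - v y) x = Lop l u x - Lop l v x := by
  unfold Lop
  have hdiff : (fun y : ℝ =>
      Complex.exp (-(2 * Real.pi * Complex.I * (l : ℂ) * (y : ℂ))) * (u y - v y)) =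
      fun y : ℝ => Complex.exp (-(2 * Real.pi * Complex.I * (l : ℂ) * (y : ℂ))) * u y -
        Complex.exp (-(2 * Real.pi * Complex.I * (l : ℂ) * (y : ℂ))) * v y := by
    funext y; ring
  rw [hdiff, deriv_fun_sub (f := fun y : ℝ => Complex.exp (-(2 * Real.pi * Complex.I * (l : ℂ) * (y : ℂ))) * u y)
    (g := fun y : ℝ => Complex.exp (-(2 * Real.pi * Complex.I * (l : ℂ) * (y : ℂ))) * v y)
    ((diff_exp_neg l x).mul hu) ((diff_exp_neg l x).mul hv)]
  ring

lemma Dl_sub_exp {s : Set ℝ} (hs : IsOpen s) :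
    ∀ (L : List ℝ) {f : ℝ → ℂ}, ContDiffOn ℝ (L.length : ℕ) f s → ∀ (K w : ℂ),
      ∀ x ∈ s, Dl L (fun y => f y - K * Complex.exp (w * (y : ℂ))) x
        = Dl L f x - ((L.map (fun l : ℝ => w - 2 * Real.pi * Complex.I * (l : ℂ))).prod * K) *
            Complex.exp (w * (x : ℂ)) := by
  intro L
  induction L with
  | nil => intro f _ K w x _; simp [Dl_nil]
  | cons l L ih =>
    intro f hf K w x hx
    have hf' : ContDiffOn ℝ (L.length : ℕ) f s := by
      apply hf.of_le
      exact_mod_cast Nat.le_succ L.length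
    rw [Dl_cons]
    have h1 : ∀ y ∈ s, Dl L (fun y => f y - K * Complex.exp (w * (y : ℂ))) y =
        (fun y : ℝ => Dl L f y -
          ((L.map (fun l : ℝ => w - 2 * Real.pi * Complex.I * (l : ℂ))).prod * K) *
            Complex.exp (w * (y : ℂ))) y := ih hf' K w
    rw [Lop_congr hs l h1 hx]
    have hU : DifferentiableAt ℝ (Dl L f) x := by
      have hsm : ContDiffOn ℝ (1 : ℕ) (Dl L f) s := by
        apply Dl_smooth hs L 1
        have hlen : (l :: L).length = L.length + 1 := by simp
        exact hlen ▸ hf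
      exact (hsm.contDiffAt (hs.mem_nhds hx)).differentiableAt (by norm_num)
    have hQ : DifferentiableAt ℝ (fun y : ℝ =>
        ((L.map (fun l : ℝ => w - 2 * Real.pi * Complex.I * (l : ℂ))).prod * K) *
          Complex.exp (w * (y : ℂ))) x :=
      ((hasDerivAt_cexp_real w x).differentiableAt).const_mul _
    rw [Lop_sub l hU hQ, congrFun (Lop_exp l _ w) x, Dl_cons]
    rw [List.map_cons, List.prod_cons]
    ring

lemma hasDerivAt_aux {s : Set ℝ} (hs : IsOpen s) (l : ℝ) {g : ℝ → ℂ}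
    (hg : ContDiffOn ℝ (1 : ℕ) g s) {x : ℝ} (hx : x ∈ s) :
    HasDerivAt (fun y : ℝ => Complex.exp (-(2 * Real.pi * Complex.I * (l : ℂ) * (y : ℂ))) * g y)
      (Complex.exp (-(2 * Real.pi * Complex.I * (l : ℂ) * (x : ℂ))) * Lop l g x) x := by
  have hgd : DifferentiableAt ℝ g x :=
    (hg.contDiffAt (hs.mem_nhds hx)).differentiableAt (by norm_num)
  have hud : DifferentiableAt ℝ
      (fun y : ℝ => Complex.exp (-(2 * Real.pi * Complex.I * (l : ℂ) * (y : ℂ))) * g y) x :=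
    (diff_exp_neg l x).mul hgd
  have h := hud.hasDerivAt
  refine h.congr_deriv ?_
  symm
  unfold Lop
  rw [← mul_assoc, ← Complex.exp_add]
  simp

lemma step (l a b : ℝ) (hab : a < b) (g v : ℝ → ℂ)
    (hv : IntegrableOn v (Set.Icc a b))
    (hgv : ∀ x ∈ Set.Ioo a b,
      HasDerivAt (fun y : ℝ => Complex.exp (-(2 * Real.pi * Complex.I * (l : ℂ) * (y : ℂ))) * g y)
        (Complex.exp (-(2 * Real.pi * Complex.I * (l : ℂ) * (x : ℂ))) * v x) x) :
    ∃ c0 : ℂ, ∀ x ∈ Set.Ioo a b,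
      ‖g x - c0 * Complex.exp (2 * Real.pi * Complex.I * (l : ℂ) * (x : ℂ))‖
        ≤ ∫ y in Set.Icc a b, ‖v y‖ := by
  set u : ℝ → ℂ :=
    fun y => Complex.exp (-(2 * Real.pi * Complex.I * (l : ℂ) * (y : ℂ))) * g y with hu
  set t : ℝ := (a + b) / 2 with htdef
  have htm : t ∈ Set.Ioo a b := ⟨by simp only [htdef]; linarith, by simp only [htdef]; linarith⟩
  refine ⟨u t, ?_⟩
  intro x hx
  have hsub : Set.uIcc t x ⊆ Set.Ioo a b := Set.ordConnected_Ioo.uIcc_subset htm hx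
  have hsub' : Set.uIoc t x ⊆ Set.Icc a b :=
    (Set.uIoc_subset_uIcc.trans hsub).trans Set.Ioo_subset_Icc_self
  have hii : IntervalIntegrable
      (fun y : ℝ => Complex.exp (-(2 * Real.pi * Complex.I * (l : ℂ) * (y : ℂ))) * v y)
      volume t x := by
    rw [intervalIntegrable_iff]
    refine (hv.mono_set hsub').bdd_mul (c := 1) ?_ (.of_forall fun y => ?_)
    · exact (Continuous.aestronglyMeasurable (by continuity))
    · rw [abs_exp_neg_eq_one]
  have hFTC : ∫ y in t..x,
      Complex.exp (-(2 * Real.pi * Complex.I * (l : ℂ) * (y : ℂ))) * v y = u x - u t :=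
    intervalIntegral.integral_eq_sub_of_hasDerivAt (fun y hy => hgv y (hsub hy)) hii
  have e1 : Complex.exp (2 * Real.pi * Complex.I * (l : ℂ) * (x : ℂ)) *
      Complex.exp (-(2 * Real.pi * Complex.I * (l : ℂ) * (x : ℂ))) = 1 := by
    rw [← Complex.exp_add]; simp
  have key : g x - u t * Complex.exp (2 * Real.pi * Complex.I * (l : ℂ) * (x : ℂ)) =
      Complex.exp (2 * Real.pi * Complex.I * (l : ℂ) * (x : ℂ)) * (u x - u t) := by
    simp only [hu]
    linear_combination (-(g x)) * e1
  rw [key, norm_mul, abs_exp_eq_one, one_mul, ← hFTC]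
  calc ‖∫ y in t..x,
        Complex.exp (-(2 * Real.pi * Complex.I * (l : ℂ) * (y : ℂ))) * v y‖
      ≤ ∫ y in Set.uIoc t x,
        ‖Complex.exp (-(2 * Real.pi * Complex.I * (l : ℂ) * (y : ℂ))) * v y‖ :=
        intervalIntegral.norm_integral_le_integral_norm_uIoc
    _ = ∫ y in Set.uIoc t x, ‖v y‖ := by
        apply setIntegral_congr_fun measurableSet_uIoc
        intro y _
        simp only []
        rw [norm_mul, abs_exp_neg_eq_one, one_mul]
    _ ≤ ∫ y in Set.Icc a b, ‖v y‖ := by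
        apply setIntegral_mono_set
        · exact hv.norm
        · exact Filter.Eventually.of_forall fun y => norm_nonneg _
        · exact HasSubset.Subset.eventuallyLE hsub'

lemma main : ∀ (L : List ℝ), L ≠ [] → L.Nodup → ∀ (a b : ℝ), a < b → ∀ (f h : ℝ → ℂ),
    ContDiffOn ℝ (L.length : ℕ) f (Set.Ioo a b) →
    IntegrableOn h (Set.Icc a b) →
    (∀ x ∈ Set.Ioo a b, Dl L f x = h x) →
    ∃ c : ℝ → ℂ, ∀ x ∈ Set.Ioo a b,
      ‖f x - (L.map (fun l : ℝ =>
          c l * Complex.exp (2 * Real.pi * Complex.I * (l : ℂ) * (x : ℂ)))).sum‖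
        ≤ (b - a) ^ (L.length - 1) * ∫ y in Set.Icc a b, ‖h y‖ := by
  intro L
  induction L with
  | nil => intro hne; exact absurd rfl hne
  | cons l0 L ih =>
    intro _ hnd a b hab f h hf hint heq
    by_cases hL : L = []
    · subst hL
      have hf1 : ContDiffOn ℝ (1 : ℕ) f (Set.Ioo a b) := hf
      have hgv : ∀ x ∈ Set.Ioo a b,
          HasDerivAt (fun y : ℝ =>
              Complex.exp (-(2 * Real.pi * Complex.I * (l0 : ℂ) * (y : ℂ))) * f y)
            (Complex.exp (-(2 * Real.pi * Complex.I * (l0 : ℂ) * (x : ℂ))) * h x) x := by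
        intro x hx
        have hd := hasDerivAt_aux isOpen_Ioo l0 hf1 hx
        have h2 : Lop l0 f x = h x := heq x hx
        rwa [h2] at hd
      obtain ⟨c0, hc0⟩ := step l0 a b hab f h hint hgv
      refine ⟨fun _ => c0, ?_⟩
      intro x hx
      simpa using hc0 x hx
    · have hm : 0 < L.length := List.length_pos_iff.mpr hL
      have hl0L : l0 ∉ L := (List.nodup_cons.mp hnd).1
      have hf1 : ContDiffOn ℝ (L.length + 1 : ℕ) f (Set.Ioo a b) := hf
      have hfL : ContDiffOn ℝ (L.length : ℕ) f (Set.Ioo a b) :=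
        hf1.of_le (by exact_mod_cast Nat.le_succ L.length)
      have hg1 : ContDiffOn ℝ (1 : ℕ) (Dl L f) (Set.Ioo a b) := Dl_smooth isOpen_Ioo L 1 hf1
      have hgv : ∀ x ∈ Set.Ioo a b,
          HasDerivAt (fun y : ℝ =>
              Complex.exp (-(2 * Real.pi * Complex.I * (l0 : ℂ) * (y : ℂ))) * Dl L f y)
            (Complex.exp (-(2 * Real.pi * Complex.I * (l0 : ℂ) * (x : ℂ))) * h x) x := by
        intro x hx
        have hd := hasDerivAt_aux isOpen_Ioo l0 hg1 hx
        have h2 : Lop l0 (Dl L f) x = h x := heq x hx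
        rwa [h2] at hd
      obtain ⟨c0, hc0⟩ := step l0 a b hab (Dl L f) h hint hgv
      set B : ℝ := ∫ y in Set.Icc a b, ‖h y‖ with hB
      set w : ℂ := 2 * Real.pi * Complex.I * (l0 : ℂ) with hw
      set K : ℂ := (L.map (fun l : ℝ => w - 2 * Real.pi * Complex.I * (l : ℂ))).prod with hK
      have hKne : K ≠ 0 := by
        rw [hK]
        apply List.prod_ne_zero
        intro hz
        rw [List.mem_map] at hz
        obtain ⟨l, hl, hl0⟩ := hz
        have h2 : (2 * Real.pi * Complex.I) * ((l0 : ℂ) - (l : ℂ)) = 0 := by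
          rw [hw] at hl0; linear_combination hl0
        rcases mul_eq_zero.mp h2 with h3 | h3
        · simp [Real.pi_ne_zero, Complex.I_ne_zero, Complex.ext_iff] at h3
        · have h4 : (l0 : ℂ) = (l : ℂ) := sub_eq_zero.mp h3
          have h5 : l0 = l := by exact_mod_cast h4
          exact hl0L (h5 ▸ hl)
      set A : ℂ := c0 / K with hA
      have hKA : K * A = c0 := by rw [hA]; field_simp
      set f' : ℝ → ℂ := fun y => f y - A * Complex.exp (w * (y : ℂ)) with hf'
      have hf's : ContDiffOn ℝ (L.length : ℕ) f' (Set.Ioo a b) :=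
        hfL.sub (contDiff_const.mul (contDiff_cexp_real w)).contDiffOn
      set H : ℝ → ℂ := fun y => Dl L f y - c0 * Complex.exp (w * (y : ℂ)) with hH
      have hDl' : ∀ x ∈ Set.Ioo a b, Dl L f' x = H x := by
        intro x hx
        have h2 := Dl_sub_exp isOpen_Ioo L hfL A w x hx
        rw [← hK, hKA] at h2
        exact h2
      have hHb : ∀ x ∈ Set.Ioo a b, ‖H x‖ ≤ B := by
        intro x hx
        simpa [hH] using hc0 x hx
      have hHcont : ContinuousOn H (Set.Ioo a b) :=
        (hg1.continuousOn).sub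
          ((continuous_const.mul (contDiff_cexp_real (n := 1) w).continuous).continuousOn)
      have hB0 : 0 ≤ B := by
        rw [hB]; exact integral_nonneg fun y => norm_nonneg _
      have hHint : IntegrableOn H (Set.Icc a b) := by
        rw [integrableOn_Icc_iff_integrableOn_Ioo]
        refine Integrable.mono' (g := fun _ => B)
          (integrableOn_const measure_Ioo_lt_top.ne)
          (hHcont.aestronglyMeasurable measurableSet_Ioo) ?_
        rw [ae_restrict_iff' measurableSet_Ioo]
        exact .of_forall fun x hx => by simpa using hHb x hx
      have hba : (0 : ℝ) < b - a := by linarith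
      have hHI : ∫ y in Set.Icc a b, ‖H y‖ ≤ (b - a) * B := by
        rw [integral_Icc_eq_integral_Ioo]
        have h1 : ∫ y in Set.Ioo a b, ‖H y‖ ≤ ∫ _ in Set.Ioo a b, B := by
          apply setIntegral_mono_on
          · exact (hHint.mono_set Set.Ioo_subset_Icc_self).norm
          · exact integrableOn_const measure_Ioo_lt_top.ne
          · exact measurableSet_Ioo
          · exact hHb
        refine h1.trans (le_of_eq ?_)
        rw [setIntegral_const]
        simp [Real.volume_Ioo, ENNReal.toReal_ofReal hba.le, hab.le]
      obtain ⟨c', hc'⟩ := ih hL (List.Nodup.of_cons hnd) a b hab f' H hf's hHint hDl'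
      refine ⟨Function.update c' l0 A, ?_⟩
      intro x hx
      have hmap : (L.map (fun l : ℝ => Function.update c' l0 A l *
            Complex.exp (2 * Real.pi * Complex.I * (l : ℂ) * (x : ℂ)))).sum =
          (L.map (fun l : ℝ => c' l *
            Complex.exp (2 * Real.pi * Complex.I * (l : ℂ) * (x : ℂ)))).sum := by
        congr 1
        apply List.map_congr_left
        intro l hl
        have hne : l ≠ l0 := fun hcon => hl0L (hcon ▸ hl)
        rw [Function.update_of_ne hne]
      have hgoal : f x - ((l0 :: L).map (fun l : ℝ => Function.update c' l0 A l *
            Complex.exp (2 * Real.pi * Complex.I * (l : ℂ) * (x : ℂ)))).sum =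
          f' x - (L.map (fun l : ℝ => c' l *
            Complex.exp (2 * Real.pi * Complex.I * (l : ℂ) * (x : ℂ)))).sum := by
        rw [List.map_cons, List.sum_cons, Function.update_self, hmap, hf']
        ring
      calc ‖f x - ((l0 :: L).map (fun l : ℝ => Function.update c' l0 A l *
            Complex.exp (2 * Real.pi * Complex.I * (l : ℂ) * (x : ℂ)))).sum‖
          = ‖f' x - (L.map (fun l : ℝ => c' l *
            Complex.exp (2 * Real.pi * Complex.I * (l : ℂ) * (x : ℂ)))).sum‖ := by rw [hgoal]
        _ ≤ (b - a) ^ (L.length - 1) * ∫ y in Set.Icc a b, ‖H y‖ := hc' x hx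
        _ ≤ (b - a) ^ (L.length - 1) * ((b - a) * B) :=
            mul_le_mul_of_nonneg_left hHI (pow_nonneg hba.le _)
        _ = (b - a) ^ ((l0 :: L).length - 1) * B := by
            have h2 : (l0 :: L).length - 1 = (L.length - 1) + 1 := by
              simp only [List.length_cons]; omega
            rw [h2, pow_succ]; ring

end Stmt6Aux

/-- Approximation by solutions of the homogeneous equation: if `Df = h` on an interval
`J ⊆ [0,1]`, where `D = ∏_j e^{2πiλ_j x}(d/dx)e^{-2πiλ_j x}` with distinct real
frequencies, then there is an exponential polynomial `p = Σ c_j e^{2πiλ_j x}` with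
`sup_J |f - p| ≤ m(J)^n · (1/m(J)) ∫_J |h|`. -/
theorem stmt_6 (n : ℕ) (hn : 1 ≤ n) (lam : Fin n → ℝ) (hlam : Function.Injective lam)
    (a b : ℝ) (hab : a < b) (ha : 0 ≤ a) (hb : b ≤ 1)
    (f h : ℝ → ℂ)
    (hf : ContDiffOn ℝ n f (Set.Icc a b))
    (hint : IntegrableOn h (Set.Icc a b))
    (D : (ℝ → ℂ) → (ℝ → ℂ))
    (hD : D = (List.ofFn fun j : Fin n => fun (g : ℝ → ℂ) (x : ℝ) =>
        Complex.exp (2 * Real.pi * Complex.I * (lam j : ℂ) * (x : ℂ)) *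
          deriv (fun y : ℝ =>
            Complex.exp (-(2 * Real.pi * Complex.I * (lam j : ℂ) * (y : ℂ))) * g y) x).foldr
        (· ∘ ·) id)
    (heq : ∀ x ∈ Set.Icc a b, D f x = h x) :
    ∃ c : Fin n → ℂ, ∀ x ∈ Set.Icc a b,
      ‖f x
          - ∑ j, c j * Complex.exp (2 * Real.pi * Complex.I * (lam j : ℂ) * (x : ℂ))‖
        ≤ (b - a) ^ n * ((b - a)⁻¹ * ∫ y in Set.Icc a b, ‖h y‖) := by
  classical
  have hDD : D = Stmt6Aux.Dl (List.ofFn lam) := by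
    rw [hD]; unfold Stmt6Aux.Dl; rw [List.map_ofFn]; rfl
  have hne : List.ofFn lam ≠ [] := by
    intro hcon
    have h1 := List.length_ofFn (f := lam)
    rw [hcon] at h1
    simp at h1
    omega
  have hnd : (List.ofFn lam).Nodup := List.nodup_ofFn.mpr hlam
  have hfI : ContDiffOn ℝ ((List.ofFn lam).length : ℕ) f (Set.Ioo a b) := by
    rw [List.length_ofFn]; exact hf.mono Set.Ioo_subset_Icc_self
  have heqI : ∀ x ∈ Set.Ioo a b, Stmt6Aux.Dl (List.ofFn lam) f x = h x := fun x hx =>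
    hDD ▸ heq x (Set.Ioo_subset_Icc_self hx)
  obtain ⟨c, hc⟩ := Stmt6Aux.main (List.ofFn lam) hne hnd a b hab f h hfI hint heqI
  refine ⟨fun j => c (lam j), ?_⟩
  have hba : (0 : ℝ) < b - a := by linarith
  have hsum : ∀ y : ℝ,
      ∑ j, c (lam j) * Complex.exp (2 * Real.pi * Complex.I * (lam j : ℂ) * (y : ℂ)) =
      ((List.ofFn lam).map (fun l : ℝ =>
        c l * Complex.exp (2 * Real.pi * Complex.I * (l : ℂ) * (y : ℂ)))).sum := by
    intro y
    rw [List.map_ofFn, List.sum_ofFn]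
    rfl
  have hR : (b - a) ^ ((List.ofFn lam).length - 1) * (∫ y in Set.Icc a b, ‖h y‖) =
      (b - a) ^ n * ((b - a)⁻¹ * ∫ y in Set.Icc a b, ‖h y‖) := by
    rw [List.length_ofFn]
    obtain ⟨m, rfl⟩ : ∃ m, n = m + 1 := ⟨n - 1, (Nat.succ_pred_eq_of_pos hn).symm⟩
    rw [Nat.add_sub_cancel, pow_succ]
    field_simp
  have hb1 : ∀ y ∈ Set.Ioo a b,
      ‖f y - ∑ j, c (lam j) *
          Complex.exp (2 * Real.pi * Complex.I * (lam j : ℂ) * (y : ℂ))‖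
        ≤ (b - a) ^ n * ((b - a)⁻¹ * ∫ y in Set.Icc a b, ‖h y‖) := by
    intro y hy
    rw [hsum y, ← hR]
    exact hc y hy
  have hpcont : Continuous (fun y : ℝ => ∑ j, c (lam j) *
      Complex.exp (2 * Real.pi * Complex.I * (lam j : ℂ) * (y : ℂ))) := by
    apply continuous_finset_sum
    intro j _
    exact continuous_const.mul
      (Stmt6Aux.contDiff_cexp_real (n := 1) (2 * Real.pi * Complex.I * (lam j : ℂ))).continuous
  have hφcont : ContinuousOn (fun y : ℝ => ‖f y - ∑ j, c (lam j) *
      Complex.exp (2 * Real.pi * Complex.I * (lam j : ℂ) * (y : ℂ))‖) (Set.Icc a b) := by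
    have h1 := (hf.continuousOn.sub hpcont.continuousOn).norm
    simpa using h1
  intro x hx
  have hclo : x ∈ closure (Set.Ioo a b) := by rw [closure_Ioo hab.ne]; exact hx
  have hNB : (nhdsWithin x (Set.Ioo a b)).NeBot := mem_closure_iff_nhdsWithin_neBot.mp hclo
  have hcw : ContinuousWithinAt (fun y : ℝ => ‖f y - ∑ j, c (lam j) *
      Complex.exp (2 * Real.pi * Complex.I * (lam j : ℂ) * (y : ℂ))‖) (Set.Ioo a b) x :=
    (hφcont x hx).mono Set.Ioo_subset_Icc_self
  exact le_of_tendsto hcw (eventually_nhdsWithin_of_forall hb1)
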